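/- For every integer n ≥ 3 and every contextual nondisturbing behavior B on the n-cycle scenario (B ∈ ND(Υ_n) \ NC(Υ_n)), there exists exactly one odd sign vector a ∈ {−1, +1}^n such that I_a(B) > n − 2. -/

import Mathlib

noncomputable section

/-- A compatibility scenario: a finite set of measurements `M`, finite nonempty
outcome sets `O x` for each measurement, and an antichain `C` of maximal contexts. -/
structure Scenario where
  M : Type
  [fintypeM : Fintype M]
  [decEqM : DecidableEq M]
  O : M → Type
  [fintypeO : ∀ x, Fintype (O x)]
  [decEqO : ∀ x, DecidableEq (O x)]
  [nonemptyO : ∀ x, Nonempty (O x)]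
  C : Finset (Finset M)
  antichain : ∀ γ ∈ C, ∀ γ' ∈ C, γ ⊆ γ' → γ = γ'

attribute [instance] Scenario.fintypeM Scenario.decEqM Scenario.fintypeO
  Scenario.decEqO Scenario.nonemptyO

/-- The elements of a set of measurements, as a type. -/
def Scenario.El (S : Scenario) (γ : Finset S.M) : Type := {x : S.M // x ∈ γ}

instance (S : Scenario) (γ : Finset S.M) : Fintype (S.El γ) :=
  show Fintype {x : S.M // x ∈ γ} from inferInstance

instance (S : Scenario) (γ : Finset S.M) : DecidableEq (S.El γ) :=
  show DecidableEq {x : S.M // x ∈ γ} from inferInstance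

/-- Joint outcomes `O^γ` of a set of measurements `γ`. -/
def Scenario.JO (S : Scenario) (γ : Finset S.M) : Type := (x : S.El γ) → S.O x.1

instance (S : Scenario) (γ : Finset S.M) : Fintype (S.JO γ) :=
  show Fintype ((x : S.El γ) → S.O x.1) from inferInstance

instance (S : Scenario) (γ : Finset S.M) : DecidableEq (S.JO γ) :=
  show DecidableEq ((x : S.El γ) → S.O x.1) from inferInstance

instance (S : Scenario) (γ : Finset S.M) : Nonempty (S.JO γ) :=
  ⟨fun _ => Classical.arbitrary _⟩

/-- Global outcome assignments `O^M`. -/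
abbrev Scenario.Glob (S : Scenario) : Type := (x : S.M) → S.O x

/-- Restriction of a global assignment to a set of measurements. -/
def Scenario.restr (S : Scenario) (γ : Finset S.M) (o : S.Glob) : S.JO γ :=
  fun x => o x.1

/-- The (maximal) contexts of a scenario. -/
def Scenario.Ctx (S : Scenario) : Type := {γ : Finset S.M // γ ∈ S.C}

instance (S : Scenario) : Fintype S.Ctx :=
  show Fintype {γ : Finset S.M // γ ∈ S.C} from inferInstance

instance (S : Scenario) : DecidableEq S.Ctx :=
  show DecidableEq {γ : Finset S.M // γ ∈ S.C} from inferInstance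

/-- A behavior (box): a family of real-valued functions, one for each maximal context. -/
def Behavior (S : Scenario) : Type := (γ : S.Ctx) → S.JO γ.1 → ℝ

/-- The family forms a probability distribution on each maximal context. -/
def IsProb (S : Scenario) (B : Behavior S) : Prop :=
  ∀ γ : S.Ctx, (∀ t, 0 ≤ B γ t) ∧ (∑ t, B γ t = 1)

/-- Kochen–Specker noncontextuality: existence of a global section, i.e. a probability
distribution on `O^M` whose marginal on each maximal context equals the behavior. -/
def IsNC (S : Scenario) (B : Behavior S) : Prop :=
  ∃ pM : S.Glob → ℝ, (∀ o, 0 ≤ pM o) ∧ (∑ o, pM o = 1) ∧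
    ∀ (γ : S.Ctx) (t : S.JO γ.1),
      B γ t = ∑ o : S.Glob, if S.restr γ.1 o = t then pM o else 0

/-- Restriction between nested sets of measurements. -/
def Scenario.restr2 (S : Scenario) {γ δ : Finset S.M} (h : δ ⊆ γ) (t : S.JO γ) :
    S.JO δ := fun x => t ⟨x.1, h x.2⟩

/-- The no-disturbance condition: marginals agree on intersections of contexts. -/
def IsND (S : Scenario) (B : Behavior S) : Prop :=
  ∀ γ γ' : S.Ctx, ∀ u : S.JO (γ.1 ∩ γ'.1),
    (∑ t : S.JO γ.1, if S.restr2 Finset.inter_subset_left t = u then B γ t else 0) =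
      (∑ t : S.JO γ'.1, if S.restr2 Finset.inter_subset_right t = u then B γ' t else 0)

/-- Factorizability: a noncontextual (hidden-variable) factorizable model. -/
def IsFactorizable (S : Scenario) (B : Behavior S) : Prop :=
  ∃ (k : ℕ) (q : Fin k → ℝ) (e : (x : S.M) → Fin k → S.O x → ℝ),
    (∀ l, 0 ≤ q l) ∧ (∑ l, q l = 1) ∧
    (∀ x l, (∀ o, 0 ≤ e x l o) ∧ (∑ o, e x l o = 1)) ∧
    ∀ (γ : S.Ctx) (t : S.JO γ.1),
      B γ t = ∑ l, q l * ∏ x : S.El γ.1, e x.1 l (t x)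

/-- The deterministic behavior induced by a global outcome assignment. -/
def detB (S : Scenario) (o : S.Glob) : Behavior S :=
  fun γ t => if S.restr γ.1 o = t then 1 else 0
/-- A noncontextual wiring with input scenario `S`, whose output scenario has the
measurements, maximal contexts and outcome sets of `T`.  It consists of a
noncontextual pre-processing behavior (given by its global section `pPre` on the
pre-processing outcome sets `OPre`), a function `f` selecting, from each
pre-processing context `β` and joint outcome `r`, a context of the input scenario,
a coordinatewise wiring `wmap` feeding every output measurement slot from a single
input measurement, and adaptively chosen noncontextual (factorizable)
post-processing boxes given by a hidden variable `φ` with distribution `q β r`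
and response functions `resp`. -/
structure Wiring (S T : Scenario) where
  OPre : T.M → Type
  [fintypeOPre : ∀ m, Fintype (OPre m)]
  [decEqOPre : ∀ m, DecidableEq (OPre m)]
  [nonemptyOPre : ∀ m, Nonempty (OPre m)]
  pPre : ((x : T.M) → OPre x) → ℝ
  pPre_nonneg : ∀ o, 0 ≤ pPre o
  pPre_sum : ∑ o, pPre o = 1
  f : (β : T.Ctx) → ((x : T.El β.1) → OPre x.1) → S.Ctx
  wmap : (β : T.Ctx) → (r : (x : T.El β.1) → OPre x.1) → T.El β.1 → S.El (f β r).1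
  nPhi : (β : T.Ctx) → ((x : T.El β.1) → OPre x.1) → ℕ
  q : (β : T.Ctx) → (r : (x : T.El β.1) → OPre x.1) → Fin (nPhi β r) → ℝ
  q_nonneg : ∀ β r φ, 0 ≤ q β r φ
  q_sum : ∀ β r, ∑ φ, q β r φ = 1
  resp : (β : T.Ctx) → (r : (x : T.El β.1) → OPre x.1) → (m : T.El β.1) →
    Fin (nPhi β r) → S.O (wmap β r m).1 → T.O m.1 → ℝ
  resp_nonneg : ∀ β r m φ o u, 0 ≤ resp β r m φ o u
  resp_sum : ∀ β r m φ o, ∑ u, resp β r m φ o u = 1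

attribute [instance] Wiring.fintypeOPre Wiring.decEqOPre Wiring.nonemptyOPre

/-- Marginal of the pre-processing behavior on a pre-processing context. -/
def Wiring.preB {S T : Scenario} (W : Wiring S T) (β : T.Ctx)
    (r : (x : T.El β.1) → W.OPre x.1) : ℝ :=
  ∑ o : (x : T.M) → W.OPre x,
    if (fun x : T.El β.1 => o x.1) = r then W.pPre o else 0

/-- The wired behavior `W(B)` on the output scenario. -/
def Wiring.apply {S T : Scenario} (W : Wiring S T) (B : Behavior S) : Behavior T :=
  fun β t =>
    ∑ r : (x : T.El β.1) → W.OPre x.1,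
      ∑ s : S.JO (W.f β r).1,
        W.preB β r * B (W.f β r) s *
          ∑ φ : Fin (W.nPhi β r),
            W.q β r φ * ∏ m : T.El β.1, W.resp β r m φ (s (W.wmap β r m)) (t m)

/-- Free convertibility of behaviors on a scenario by noncontextual wirings (whose
output scenario has the same maximal contexts and context-outcome sets). -/
def Arrow (S : Scenario) (B B' : Behavior S) : Prop :=
  ∃ W : Wiring S S, W.apply B = B'
/-- Successor modulo `n`. -/
def cycSucc {n : ℕ} (i : Fin n) : Fin n :=
  ⟨(i.1 + 1) % n, Nat.mod_lt _ (Nat.lt_of_le_of_lt (Nat.zero_le _) i.isLt)⟩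

/-- The maximal context `{x_i, x_{i+1 mod n}}` of the `n`-cycle scenario. -/
def cycCtx {n : ℕ} (i : Fin n) : Finset (Fin n) := {i, cycSucc i}

theorem cycSucc_ne {n : ℕ} (hn : 3 ≤ n) (i : Fin n) : i ≠ cycSucc i := by
  intro h
  have h1 : i.1 = (i.1 + 1) % n := congrArg Fin.val h
  rcases Nat.lt_or_ge (i.1 + 1) n with h3 | h3
  · rw [Nat.mod_eq_of_lt h3] at h1
    omega
  · have h2 : i.1 < n := i.isLt
    have h4 : i.1 + 1 = n := by omega
    rw [h4, Nat.mod_self] at h1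
    omega

/-- The `n`-cycle compatibility scenario: `n` dichotomic measurements with maximal
contexts `{x_i, x_{i+1 mod n}}`. -/
def cycleScenario (n : ℕ) (hn : 3 ≤ n) : Scenario where
  M := Fin n
  O := fun _ => Bool
  C := Finset.image (fun i : Fin n => cycCtx i) Finset.univ
  antichain := by
    intro γ hγ γ' hγ' hsub
    simp only [Finset.mem_image, Finset.mem_univ, true_and] at hγ hγ'
    obtain ⟨i, rfl⟩ := hγ
    obtain ⟨j, rfl⟩ := hγ'
    refine Finset.eq_of_subset_of_card_le hsub (le_of_eq ?_)
    show ({j, cycSucc j} : Finset (Fin n)).card = ({i, cycSucc i} : Finset (Fin n)).card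
    rw [Finset.card_pair (cycSucc_ne hn j), Finset.card_pair (cycSucc_ne hn i)]

theorem cycCtx_mem {n : ℕ} (hn : 3 ≤ n) (i : Fin n) :
    cycCtx i ∈ (cycleScenario n hn).C :=
  Finset.mem_image_of_mem _ (Finset.mem_univ i)

/-- The context `{x_i, x_{i+1}}` as a maximal context of the `n`-cycle scenario. -/
def cycCtxC {n : ℕ} (hn : 3 ≤ n) (i : Fin n) : (cycleScenario n hn).Ctx :=
  ⟨cycCtx i, cycCtx_mem hn i⟩

/-- The ±1 value of a Boolean outcome. -/
def sgn (b : Bool) : ℝ := if b then 1 else -1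

/-- Two-point correlator `⟨x_i x_{i+1}⟩` of a behavior at a maximal context. -/
def corrCtx {n : ℕ} {hn : 3 ≤ n} (B : Behavior (cycleScenario n hn))
    (γ : (cycleScenario n hn).Ctx) : ℝ :=
  ∑ t : (cycleScenario n hn).JO γ.1, (∏ x, sgn (t x)) * B γ t

/-- The `n`-cycle functional `I_a(B) = Σ_i a_i ⟨x_i x_{i+1}⟩`. -/
def Ifun {n : ℕ} (hn : 3 ≤ n) (a : Fin n → ℤ) (B : Behavior (cycleScenario n hn)) : ℝ :=
  ∑ i : Fin n, (a i : ℝ) * corrCtx B (cycCtxC hn i)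

/-- `a` is a `±1`-valued sign vector. -/
def IsSign {n : ℕ} (a : Fin n → ℤ) : Prop := ∀ i, a i = 1 ∨ a i = -1

/-- `a` has an odd number of entries equal to `-1`. -/
def IsOddSign {n : ℕ} (a : Fin n → ℤ) : Prop :=
  Odd (Finset.univ.filter fun i => a i = -1).card

theorem exists_edge {n : ℕ} {hn : 3 ≤ n} (γ : (cycleScenario n hn).Ctx) :
    ∃ i : Fin n, cycCtx i = γ.1 := by
  have h : γ.1 ∈ Finset.image (fun i : Fin n => cycCtx i) Finset.univ := γ.2
  obtain ⟨i, -, h2⟩ := Finset.mem_image.mp h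
  exact ⟨i, h2⟩

/-- The index `i` such that a maximal context is `{x_i, x_{i+1}}`. -/
def edgeOf {n : ℕ} (hn : 3 ≤ n) (γ : (cycleScenario n hn).Ctx) : Fin n :=
  (exists_edge γ).choose

/-- The behavior with prescribed two-point correlators `E i` and unbiased marginals:
`p_{γ_i}(s,t) = (1 + E i · s · t)/4`. -/
def corrBeh {n : ℕ} (hn : 3 ≤ n) (E : Fin n → ℝ) : Behavior (cycleScenario n hn) :=
  fun γ t => (1 + E (edgeOf hn γ) * ∏ x, sgn (t x)) / 4

/-- The strongly contextual nondisturbing vertex `B_a` with `p_{γ_i}(s,t) = (1 + a_i·s·t)/4`. -/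
def Ba {n : ℕ} (hn : 3 ≤ n) (a : Fin n → ℤ) : Behavior (cycleScenario n hn) :=
  corrBeh hn fun i => (a i : ℝ)

/-- The behavior `B_∅` with all outcomes equally likely. -/
def Bempty {n : ℕ} (hn : 3 ≤ n) : Behavior (cycleScenario n hn) :=
  corrBeh hn 0

/-- `B'_a = ((n-2)/n)·B_a + (2/n)·B_∅`. -/
def Ba' {n : ℕ} (hn : 3 ≤ n) (a : Fin n → ℤ) : Behavior (cycleScenario n hn) :=
  fun γ t => ((n : ℝ) - 2) / n * Ba hn a γ t + 2 / n * Bempty hn γ t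

/-- The element `ε·B_a + (1-ε)·B'_a` of the set `P_a`. -/
def Pbeh {n : ℕ} (hn : 3 ≤ n) (a : Fin n → ℤ) (ε : ℝ) : Behavior (cycleScenario n hn) :=
  fun γ t => ε * Ba hn a γ t + (1 - ε) * Ba' hn a γ t

/-- The family `B(α,ε) = α·B̃ + (1-α)·(ε·B_a + (1-ε)·B'_a)`, where `B̃` is the
deterministic noncontextual behavior induced by the global assignment `c`. -/
def Bae {n : ℕ} (hn : 3 ≤ n) (a : Fin n → ℤ) (c : (cycleScenario n hn).Glob) (α ε : ℝ) :
    Behavior (cycleScenario n hn) :=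
  fun γ t => α * detB _ c γ t + (1 - α) * Pbeh hn a ε γ t

/-- The yield monotone `y_a(B) = sup { I_a(B') : B' ∈ ND(Υ_n), B → B' }`. -/
def yieldM {n : ℕ} (hn : 3 ≤ n) (a : Fin n → ℤ) (B : Behavior (cycleScenario n hn)) : ℝ :=
  sSup {y : ℝ | ∃ B' : Behavior (cycleScenario n hn),
    IsProb _ B' ∧ IsND _ B' ∧ Arrow _ B B' ∧ y = Ifun hn a B'}

/-- The cost monotone `c_a(B) = inf { I_a(B') : B' ∈ P_a, B' → B } ∈ ℝ ∪ {+∞}`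
(with `inf ∅ = +∞`). -/
def costM {n : ℕ} (hn : 3 ≤ n) (a : Fin n → ℤ) (B : Behavior (cycleScenario n hn)) : EReal :=
  sInf {x : EReal | ∃ ε : ℝ, 0 ≤ ε ∧ ε ≤ 1 ∧ Arrow _ (Pbeh hn a ε) B ∧
    x = ((Ifun hn a (Pbeh hn a ε) : ℝ) : EReal)}
namespace NCyc

def sg (b : Bool) : ℝ := if b then 1 else -1

lemma sg_mul_self (b : Bool) : sg b * sg b = 1 := by cases b <;> simp [sg]

/-- two-outcome edge box with marginals m1, m2 and correlator e -/
def pbox (m1 m2 e : ℝ) (a b : Bool) : ℝ :=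
  (1 + sg a * m1 + sg b * m2 + sg a * sg b * e) / 4

lemma pbox_comm (m1 m2 e : ℝ) (a b : Bool) : pbox m1 m2 e a b = pbox m2 m1 e b a := by
  unfold pbox; ring

/-- validity (positivity) of an edge box -/
def Vedge (m1 m2 e : ℝ) : Prop :=
  0 ≤ 1 + m1 + m2 + e ∧ 0 ≤ 1 + m1 - m2 - e ∧ 0 ≤ 1 - m1 + m2 - e ∧ 0 ≤ 1 - m1 - m2 + e

lemma Vedge.nonneg {m1 m2 e : ℝ} (h : Vedge m1 m2 e) (a b : Bool) :
    0 ≤ pbox m1 m2 e a b := by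
  obtain ⟨h1, h2, h3, h4⟩ := h
  cases a <;> cases b <;> simp [pbox, sg] <;> linarith

lemma Vedge_of_nonneg {m1 m2 e : ℝ} (h : ∀ a b, 0 ≤ pbox m1 m2 e a b) :
    Vedge m1 m2 e := by
  have h1 := h true true; have h2 := h true false
  have h3 := h false true; have h4 := h false false
  simp [pbox, sg] at h1 h2 h3 h4
  refine ⟨by linarith, by linarith, by linarith, by linarith⟩

lemma pbox_sum (m1 m2 e : ℝ) (a : Bool) :
    pbox m1 m2 e a true + pbox m1 m2 e a false = (1 + sg a * m1) / 2 := by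
  cases a <;> simp [pbox, sg] <;> ring

lemma Vedge.absE {m1 m2 e : ℝ} (h : Vedge m1 m2 e) : |e| ≤ 1 := by
  obtain ⟨h1, h2, h3, h4⟩ := h; rw [abs_le]; constructor <;> linarith

lemma Vedge.absm1 {m1 m2 e : ℝ} (h : Vedge m1 m2 e) : |m1| ≤ 1 := by
  obtain ⟨h1, h2, h3, h4⟩ := h; rw [abs_le]; constructor <;> linarith

lemma Vedge.absm2 {m1 m2 e : ℝ} (h : Vedge m1 m2 e) : |m2| ≤ 1 := by
  obtain ⟨h1, h2, h3, h4⟩ := h; rw [abs_le]; constructor <;> linarith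

/-- existence of a triangle joint with prescribed pair marginals. -/
lemma tri_exists (m1 m2 m3 e12 e23 e31 : ℝ)
    (h12 : Vedge m1 m2 e12) (h23 : Vedge m2 m3 e23) (h31 : Vedge m1 m3 e31)
    (t1 : -e12 - e23 - e31 ≤ 1) (t2 : -e12 + e23 + e31 ≤ 1)
    (t3 : e12 - e23 + e31 ≤ 1) (t4 : e12 + e23 - e31 ≤ 1) :
    ∃ r : Bool → Bool → Bool → ℝ, (∀ a b c, 0 ≤ r a b c) ∧
      (∀ a b, r a b true + r a b false = pbox m1 m2 e12 a b) ∧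
      (∀ b c, r true b c + r false b c = pbox m2 m3 e23 b c) ∧
      (∀ a c, r a true c + r a false c = pbox m1 m3 e31 a c) := by
  obtain ⟨a1, a2, a3, a4⟩ := h12
  obtain ⟨b1, b2, b3, b4⟩ := h23
  obtain ⟨c1, c2, c3, c4⟩ := h31
  obtain ⟨F, hFl1, hFl2, hFl3, hFl4, hFu1, hFu2, hFu3, hFu4⟩ :
      ∃ F : ℝ, -(1 + m1 + m2 + m3 + e12 + e23 + e31) ≤ F ∧
        -(1 + m1 - m2 - m3 - e12 + e23 - e31) ≤ F ∧
        -(1 - m1 + m2 - m3 - e12 - e23 + e31) ≤ F ∧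
        -(1 - m1 - m2 + m3 + e12 - e23 - e31) ≤ F ∧
        F ≤ 1 - m1 + m2 + m3 - e12 + e23 - e31 ∧
        F ≤ 1 + m1 - m2 + m3 - e12 - e23 + e31 ∧
        F ≤ 1 + m1 + m2 - m3 + e12 - e23 - e31 ∧
        F ≤ 1 - m1 - m2 - m3 + e12 + e23 + e31 := by
    refine ⟨max (max (-(1 + m1 + m2 + m3 + e12 + e23 + e31))
        (-(1 + m1 - m2 - m3 - e12 + e23 - e31)))
        (max (-(1 - m1 + m2 - m3 - e12 - e23 + e31))
        (-(1 - m1 - m2 + m3 + e12 - e23 - e31))),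
      le_max_of_le_left (le_max_left _ _), le_max_of_le_left (le_max_right _ _),
      le_max_of_le_right (le_max_left _ _), le_max_of_le_right (le_max_right _ _),
      ?_, ?_, ?_, ?_⟩ <;>
      exact max_le (max_le (by linarith) (by linarith)) (max_le (by linarith) (by linarith))
  refine ⟨fun a b c => (1 + sg a * m1 + sg b * m2 + sg c * m3 + sg a * sg b * e12
      + sg b * sg c * e23 + sg c * sg a * e31 + sg a * sg b * sg c * F) / 8,
    ?_, ?_, ?_, ?_⟩
  · intro a b c; cases a <;> cases b <;> cases c <;> simp [sg] <;> linarith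
  · intro a b; cases a <;> cases b <;> simp [pbox, sg] <;> ring
  · intro b c; cases b <;> cases c <;> simp [pbox, sg] <;> ring
  · intro a c; cases a <;> cases c <;> simp [pbox, sg] <;> ring

end NCyc

namespace NCyc
open Finset

lemma sum_snoc {n : ℕ} (g : (Fin (n + 1) → Bool) → ℝ) :
    ∑ f, g f = ∑ h : Fin n → Bool, ∑ v : Bool, g (Fin.snoc h v) := by
  rw [← (Fin.snocEquiv (fun _ => Bool)).sum_comp g, Fintype.sum_prod_type, Finset.sum_comm]
  rfl

lemma step_bound {m1 m2 e : ℝ} (h : Vedge m1 m2 e) {s t : ℝ}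
    (hs : s = 1 ∨ s = -1) (ht : t = 1 ∨ t = -1) :
    |s * m1 - t * m2| ≤ 1 - s * t * e := by
  obtain ⟨h1, h2, h3, h4⟩ := h
  rcases hs with rfl | rfl <;> rcases ht with rfl | rfl <;>
    rw [abs_le] <;> constructor <;> nlinarith

lemma telescope (m E τ : ℕ → ℝ) (hτ : ∀ i, τ i = 1 ∨ τ i = -1) :
    ∀ k, (∀ i, i < k → Vedge (m i) (m (i + 1)) (E i)) →
    |τ 0 * m 0 - τ k * m k| ≤ ∑ i ∈ Finset.range k, (1 - τ i * τ (i + 1) * E i) := by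
  intro k
  induction k with
  | zero => simp
  | succ k ih =>
    intro hV
    rw [Finset.sum_range_succ]
    calc |τ 0 * m 0 - τ (k + 1) * m (k + 1)|
        ≤ |τ 0 * m 0 - τ k * m k| + |τ k * m k - τ (k + 1) * m (k + 1)| := abs_sub_le _ _ _
      _ ≤ (∑ i ∈ Finset.range k, (1 - τ i * τ (i + 1) * E i))
          + (1 - τ k * τ (k + 1) * E k) := by
          gcongr
          · exact ih fun i hi => hV i (by omega)
          · exact step_bound (hV k (by omega)) (hτ k) (hτ (k + 1))

lemma prod_telescope (τ : ℕ → ℝ) (hτ : ∀ i, τ i = 1 ∨ τ i = -1) (k : ℕ) :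
    ∏ i ∈ Finset.range k, (τ i * τ (i + 1)) = τ 0 * τ k := by
  induction k with
  | zero => rcases hτ 0 with h | h <;> simp [h]
  | succ k ih =>
    rw [Finset.prod_range_succ, ih]
    rcases hτ k with h | h <;> rw [mul_assoc, ← mul_assoc (τ k), h] <;> ring

end NCyc

namespace NCyc

lemma pbox_total (m1 m2 e : ℝ) : ∑ a : Bool, ∑ b : Bool, pbox m1 m2 e a b = 1 := by
  simp [Fintype.sum_bool, pbox, sg]; ring

lemma snoc_lt {n : ℕ} (h : Fin n → Bool) (v : Bool) (i : ℕ) (hi : i < n) (hi' : i < n + 1) :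
    (Fin.snoc h v : Fin (n + 1) → Bool) ⟨i, hi'⟩ = h ⟨i, hi⟩ := by
  have e : (⟨i, hi'⟩ : Fin (n + 1)) = Fin.castSucc ⟨i, hi⟩ := rfl
  rw [e, Fin.snoc_castSucc]

lemma snoc_top {n : ℕ} (h : Fin n → Bool) (v : Bool) (hi' : n < n + 1) :
    (Fin.snoc h v : Fin (n + 1) → Bool) ⟨n, hi'⟩ = v := by
  have e : (⟨n, hi'⟩ : Fin (n + 1)) = Fin.last n := rfl
  rw [e, Fin.snoc_last]

/-- pair marginal of a joint distribution -/
def mar {n : ℕ} (q : (Fin n → Bool) → ℝ) (j l : Fin n) (a b : Bool) : ℝ :=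
  ∑ f, if f j = a ∧ f l = b then q f else 0

/-- real sign vector on `Fin n` extended to `ℕ` -/
def extb (n : ℕ) (τ : Fin n → Bool) : ℕ → ℝ :=
  fun i => if h : i < n then sg (τ ⟨i, h⟩) else 1

lemma extb_sign (n : ℕ) (τ : Fin n → Bool) : ∀ i, extb n τ i = 1 ∨ extb n τ i = -1 := by
  intro i; unfold extb
  split
  · cases τ _ <;> simp [sg]
  · left; rfl

lemma extb_lt (n : ℕ) (τ : Fin n → Bool) (i : ℕ) (h : i < n) :
    extb n τ i = sg (τ ⟨i, h⟩) := dif_pos h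

/-- signed path sum -/
def psum (n : ℕ) (E : ℕ → ℝ) (τ : Fin n → Bool) : ℝ :=
  ∑ i ∈ Finset.range (n - 1), extb n τ i * extb n τ (i + 1) * E i

lemma sum_ite_const {P : Prop} [Decidable P] (F : Bool → ℝ) :
    (∑ v : Bool, if P then F v else 0) = if P then (∑ v, F v) else 0 := by
  split <;> simp

lemma sum_collapse (Q : Prop) [Decidable Q] (b : Bool) (F : Bool → ℝ) :
    (∑ v : Bool, if Q ∧ v = b then F v else 0) = if Q then F b else 0 := by
  cases b <;> by_cases hq : Q <;> simp [hq]

lemma sum_collapse' (Q : Prop) [Decidable Q] (a : Bool) (F : Bool → ℝ) :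
    (∑ v : Bool, if v = a ∧ Q then F v else 0) = if Q then F a else 0 := by
  cases a <;> by_cases hq : Q <;> simp [hq]

lemma split_val {k : ℕ} (F : (Fin k → Bool) → ℝ) (j : Fin k) :
    ∑ g, F g = ∑ c : Bool, ∑ g, if g j = c then F g else 0 := by
  rw [Finset.sum_comm]
  refine Finset.sum_congr rfl fun g _ => ?_
  rw [Fintype.sum_ite_eq (g j) (fun _ => F g)]

theorem core : ∀ n : ℕ, 3 ≤ n → ∀ m E : ℕ → ℝ,
    (∀ i, i < n - 1 → Vedge (m i) (m (i + 1)) (E i)) →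
    Vedge (m (n - 1)) (m 0) (E (n - 1)) →
    (∀ τ : ℕ → ℝ, (∀ i, τ i = 1 ∨ τ i = -1) →
      (∑ i ∈ Finset.range (n - 1), τ i * τ (i + 1) * E i)
        - τ (n - 1) * τ 0 * E (n - 1) ≤ (n : ℝ) - 2) →
    ∃ q : (Fin n → Bool) → ℝ, (∀ f, 0 ≤ q f) ∧ (∑ f, q f = 1) ∧
      (∀ j l : Fin n, l.1 = j.1 + 1 → ∀ a b : Bool,
        mar q j l a b = pbox (m j.1) (m (j.1 + 1)) (E j.1) a b) ∧
      (∀ j l : Fin n, j.1 = n - 1 → l.1 = 0 → ∀ a b : Bool,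
        mar q j l a b = pbox (m (n - 1)) (m 0) (E (n - 1)) a b) := by
  intro n hn
  induction n, hn using Nat.le_induction with
  | base =>
    intro m E hV hVlast hC
    have hV0 := hV 0 (by norm_num)
    have hV1 := hV 1 (by norm_num)
    have hV2 : Vedge (m 2) (m 0) (E 2) := hVlast
    -- four triangle inequalities from hC
    have hc1 : -E 0 - E 1 - E 2 ≤ 1 := by
      have := hC (fun i => if i = 1 then -1 else 1) (by intro i; split <;> simp)
      simp [Finset.sum_range_succ] at this; linarith
    have hc2 : -E 0 + E 1 + E 2 ≤ 1 := by
      have := hC (fun i => if i = 0 then -1 else 1) (by intro i; split <;> simp)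
      simp [Finset.sum_range_succ] at this; linarith
    have hc3 : E 0 - E 1 + E 2 ≤ 1 := by
      have := hC (fun i => if i = 2 then -1 else 1) (by intro i; split <;> simp)
      simp [Finset.sum_range_succ] at this; linarith
    have hc4 : E 0 + E 1 - E 2 ≤ 1 := by
      have := hC (fun i => (1 : ℝ)) (by intro i; left; rfl)
      simp [Finset.sum_range_succ] at this; linarith
    obtain ⟨r, hr0, hr12, hr23, hr31⟩ :=
      tri_exists (m 0) (m 1) (m 2) (E 0) (E 1) (E 2) hV0 hV1
        (by obtain ⟨x1, x2, x3, x4⟩ := hV2; exact ⟨by linarith, by linarith, by linarith, by linarith⟩)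
        hc1 hc2 hc3 hc4
    have expand : ∀ G : (Fin 3 → Bool) → ℝ, ∑ f, G f =
        ∑ a : Bool, ∑ b : Bool, ∑ c : Bool,
          G (Fin.snoc (Fin.snoc (Fin.snoc (default : Fin 0 → Bool) a) b) c) := by
      intro G
      rw [sum_snoc, sum_snoc, sum_snoc, Fintype.sum_unique]
      refine Finset.sum_congr rfl fun a _ => Finset.sum_congr rfl fun b _ =>
        Finset.sum_congr rfl fun c _ => ?_
      congr 1
    have ev0 : ∀ a b c : Bool,
        (Fin.snoc (Fin.snoc (Fin.snoc (default : Fin 0 → Bool) a) b) c : Fin 3 → Bool)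
          ⟨0, by norm_num⟩ = a := by
      intro a b c
      rw [snoc_lt _ _ 0 (by norm_num), snoc_lt _ _ 0 (by norm_num), snoc_top]
    have ev1 : ∀ a b c : Bool,
        (Fin.snoc (Fin.snoc (Fin.snoc (default : Fin 0 → Bool) a) b) c : Fin 3 → Bool)
          ⟨1, by norm_num⟩ = b := by
      intro a b c
      rw [snoc_lt _ _ 1 (by norm_num), snoc_top]
    have ev2 : ∀ a b c : Bool,
        (Fin.snoc (Fin.snoc (Fin.snoc (default : Fin 0 → Bool) a) b) c : Fin 3 → Bool)
          ⟨2, by norm_num⟩ = c := by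
      intro a b c
      rw [snoc_top]
    have hptot := pbox_total (m 0) (m 1) (E 0)
    simp only [Fintype.sum_bool] at hptot
    refine ⟨fun f => r (f ⟨0, by norm_num⟩) (f ⟨1, by norm_num⟩) (f ⟨2, by norm_num⟩),
      fun f => hr0 _ _ _, ?_, ?_, ?_⟩
    · rw [expand]
      simp only [ev0, ev1, ev2, Fintype.sum_bool]
      linarith [hr12 true true, hr12 true false, hr12 false true, hr12 false false]
    · intro j l hjl a b
      have hj2 : j.1 < 2 := by have := l.2; omega
      unfold mar
      rw [expand]
      rcases j with ⟨jv, hjv⟩; rcases l with ⟨lv, hlv⟩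
      simp only at hjl hj2
      subst hjl
      interval_cases jv
      · simp only [ev0, ev1, ev2, Fintype.sum_bool]
        have h1 := hr12 a b
        norm_num
        cases a <;> cases b <;> simp <;> linarith
      · simp only [ev0, ev1, ev2, Fintype.sum_bool]
        have h1 := hr23 a b
        norm_num
        cases a <;> cases b <;> simp <;> linarith
    · intro j l hj hl a b
      unfold mar
      rw [expand]
      rcases j with ⟨jv, hjv⟩; rcases l with ⟨lv, hlv⟩
      simp only at hj hl
      subst hj; subst hl
      simp only [ev0, ev1, ev2, Fintype.sum_bool]
      rw [show (3:ℕ) - 1 = 2 from rfl, pbox_comm]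
      have h1 := hr31 b a
      norm_num
      cases a <;> cases b <;> simp <;> linarith
  | succ n hn ih =>
    intro m E hV hVlast hC
    simp only [Nat.add_sub_cancel] at hV hVlast hC ⊢
    classical
    have hn1 : n - 1 + 1 = n := by omega
    have hVe1 : Vedge (m (n - 1)) (m n) (E (n - 1)) := by
      have := hV (n - 1) (by omega); rwa [hn1] at this
    have range_split : ∀ g : ℕ → ℝ,
        ∑ i ∈ Finset.range n, g i = (∑ i ∈ Finset.range (n - 1), g i) + g (n - 1) := by
      intro g
      conv_lhs => rw [show n = n - 1 + 1 by omega]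
      rw [Finset.sum_range_succ]
    -- extension of the cycle inequality
    have hCext : ∀ (τ : Fin n → Bool) (c : ℝ), (c = 1 ∨ c = -1) →
        psum n E τ + extb n τ (n - 1) * c * E (n - 1) - c * extb n τ 0 * E n
          ≤ (n : ℝ) - 1 := by
      intro τ c hc
      set τ' : ℕ → ℝ := fun i => if i = n then c else extb n τ i with hτ'
      have hsign : ∀ i, τ' i = 1 ∨ τ' i = -1 := by
        intro i; rw [hτ']; dsimp only
        split
        · exact hc
        · exact extb_sign n τ i
      have h := hC τ' hsign
      rw [range_split] at h
      rw [hn1] at h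
      have e1 : ∑ i ∈ Finset.range (n - 1), τ' i * τ' (i + 1) * E i = psum n E τ := by
        refine Finset.sum_congr rfl fun i hi => ?_
        rw [Finset.mem_range] at hi
        rw [hτ']; dsimp only
        rw [if_neg (by omega), if_neg (by omega)]
      have e2 : τ' (n - 1) = extb n τ (n - 1) := by rw [hτ']; dsimp only; rw [if_neg (by omega)]
      have e3 : τ' n = c := by rw [hτ']; dsimp only; rw [if_pos rfl]
      have e4 : τ' 0 = extb n τ 0 := by rw [hτ']; dsimp only; rw [if_neg (by omega)]
      rw [e1, e2, e3, e4] at h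
      push_cast at h
      linarith
    -- telescoping bounds
    have htel : ∀ τ : Fin n → Bool,
        |extb n τ 0 * m 0 - extb n τ (n - 1) * m (n - 1)| ≤ ((n : ℝ) - 1) - psum n E τ := by
      intro τ
      have h := telescope m E (extb n τ) (extb_sign n τ) (n - 1) (fun i hi => hV i (by omega))
      have : ∑ i ∈ Finset.range (n - 1), (1 - extb n τ i * extb n τ (i + 1) * E i)
          = ((n : ℝ) - 1) - psum n E τ := by
        rw [Finset.sum_sub_distrib, Finset.sum_const, Finset.card_range, psum]
        have : ((n - 1 : ℕ) : ℝ) = (n : ℝ) - 1 := by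
          have : (1 : ℕ) ≤ n := by omega
          push_cast [this]; ring
        rw [nsmul_eq_mul, this]; ring
      rw [this] at h
      exact h
    have hsq : ∀ (τ : Fin n → Bool) (i : ℕ), extb n τ i * extb n τ i = 1 := by
      intro τ i; rcases extb_sign n τ i with h | h <;> rw [h] <;> norm_num
    have hCgen : ∀ (τ : Fin n → Bool) (σ : ℝ), (σ = 1 ∨ σ = -1) →
        psum n E τ + σ * E (n - 1) - σ * (extb n τ 0 * extb n τ (n - 1)) * E n
          ≤ (n : ℝ) - 1 := by
      intro τ σ hσ
      have hc : σ * extb n τ (n - 1) = 1 ∨ σ * extb n τ (n - 1) = -1 := by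
        rcases hσ with rfl | rfl <;> rcases extb_sign n τ (n - 1) with h | h <;>
          rw [h] <;> norm_num
      have h := hCext τ (σ * extb n τ (n - 1)) hc
      have e1 : extb n τ (n - 1) * (σ * extb n τ (n - 1)) * E (n - 1) = σ * E (n - 1) := by
        linear_combination σ * E (n - 1) * hsq τ (n - 1)
      have e2 : σ * extb n τ (n - 1) * extb n τ 0 * E n
          = σ * (extb n τ 0 * extb n τ (n - 1)) * E n := by ring
      rw [e1, e2] at h
      exact h
    have htelE : ∀ τ : Fin n → Bool, extb n τ 0 * extb n τ (n - 1) = 1 →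
        |m (n - 1) - m 0| ≤ ((n : ℝ) - 1) - psum n E τ := by
      intro τ hev
      have h := htel τ
      rcases extb_sign n τ 0 with h0 | h0 <;> rcases extb_sign n τ (n - 1) with h1 | h1 <;>
        rw [h0, h1] at h hev
      · rwa [one_mul, one_mul, abs_sub_comm] at h
      · norm_num at hev
      · norm_num at hev
      · rwa [show (-1 : ℝ) * m 0 - (-1) * m (n - 1) = -(m 0 - m (n - 1)) by ring, abs_neg,
          abs_sub_comm] at h
    have htelO : ∀ τ : Fin n → Bool, extb n τ 0 * extb n τ (n - 1) = -1 →
        |m (n - 1) + m 0| ≤ ((n : ℝ) - 1) - psum n E τ := by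
      intro τ hodd
      have h := htel τ
      rcases extb_sign n τ 0 with h0 | h0 <;> rcases extb_sign n τ (n - 1) with h1 | h1 <;>
        rw [h0, h1] at h hodd
      · norm_num at hodd
      · rwa [show (1 : ℝ) * m 0 - (-1) * m (n - 1) = m (n - 1) + m 0 by ring] at h
      · rwa [show (-1 : ℝ) * m 0 - 1 * m (n - 1) = -(m (n - 1) + m 0) by ring, abs_neg] at h
      · norm_num at hodd
    set T : Finset (Fin n → Bool) :=
      Finset.univ.filter (fun τ => extb n τ 0 * extb n τ (n - 1) = 1) with hT
    have hTne : T.Nonempty := by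
      refine ⟨fun _ => true, ?_⟩
      rw [hT, Finset.mem_filter]
      refine ⟨Finset.mem_univ _, ?_⟩
      rw [extb_lt n _ 0 (by omega), extb_lt n _ (n - 1) (by omega)]
      simp [sg]
    set Smax := T.sup' hTne (psum n E) with hSmax
    set E3 : ℝ := max (|E (n - 1) + E n| - 1)
      (max (|m (n - 1) + m 0| - 1) (Smax - ((n : ℝ) - 2))) with hE3
    have hLo1 : |E (n - 1) + E n| - 1 ≤ E3 := le_max_left _ _
    have hLo3 : |m (n - 1) + m 0| - 1 ≤ E3 := le_max_of_le_right (le_max_left _ _)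
    have hLoS : ∀ τ ∈ T, psum n E τ - ((n : ℝ) - 2) ≤ E3 := by
      intro τ hτ
      refine le_max_of_le_right (le_max_of_le_right ?_)
      exact sub_le_sub_right (Finset.le_sup' (psum n E) hτ) _
    obtain ⟨va1, va2, va3, va4⟩ := hVe1
    obtain ⟨vb1, vb2, vb3, vb4⟩ := hVlast
    have hU1 : E3 ≤ 1 - |E (n - 1) - E n| := by
      rw [hE3]
      refine max_le ?_ (max_le ?_ ?_)
      · rcases abs_cases (E (n - 1) + E n) with ⟨h, _⟩ | ⟨h, _⟩ <;>
          rcases abs_cases (E (n - 1) - E n) with ⟨h', _⟩ | ⟨h', _⟩ <;> rw [h, h'] <;> linarith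
      · rcases abs_cases (m (n - 1) + m 0) with ⟨h, _⟩ | ⟨h, _⟩ <;>
          rcases abs_cases (E (n - 1) - E n) with ⟨h', _⟩ | ⟨h', _⟩ <;> rw [h, h'] <;> linarith
      · have hS : Smax ≤ ((n : ℝ) - 1) - |E (n - 1) - E n| := by
          apply Finset.sup'_le
          intro τ hτ
          have hev := (Finset.mem_filter.mp hτ).2
          have g1 := hCgen τ 1 (Or.inl rfl); rw [hev] at g1
          have g2 := hCgen τ (-1) (Or.inr rfl); rw [hev] at g2
          rcases abs_cases (E (n - 1) - E n) with ⟨h', _⟩ | ⟨h', _⟩ <;> rw [h'] <;> linarith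
        linarith
    have hU3 : E3 ≤ 1 - |m (n - 1) - m 0| := by
      rw [hE3]
      refine max_le ?_ (max_le ?_ ?_)
      · rcases abs_cases (E (n - 1) + E n) with ⟨h, _⟩ | ⟨h, _⟩ <;>
          rcases abs_cases (m (n - 1) - m 0) with ⟨h', _⟩ | ⟨h', _⟩ <;> rw [h, h'] <;> linarith
      · rcases abs_cases (m (n - 1) + m 0) with ⟨h, _⟩ | ⟨h, _⟩ <;>
          rcases abs_cases (m (n - 1) - m 0) with ⟨h', _⟩ | ⟨h', _⟩ <;> rw [h, h'] <;> linarith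
      · have hS : Smax ≤ ((n : ℝ) - 1) - |m (n - 1) - m 0| := by
          apply Finset.sup'_le
          intro τ hτ
          have hev := (Finset.mem_filter.mp hτ).2
          have := htelE τ hev
          linarith
        linarith
    have hD : ∀ τ : Fin n → Bool, extb n τ 0 * extb n τ (n - 1) = -1 →
        E3 ≤ ((n : ℝ) - 2) - psum n E τ := by
      intro τ hodd
      rw [hE3]
      refine max_le ?_ (max_le ?_ ?_)
      · have g1 := hCgen τ 1 (Or.inl rfl); rw [hodd] at g1
        have g2 := hCgen τ (-1) (Or.inr rfl); rw [hodd] at g2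
        rcases abs_cases (E (n - 1) + E n) with ⟨h, _⟩ | ⟨h, _⟩ <;> rw [h] <;> linarith
      · have := htelO τ hodd
        linarith
      · have hpair : ∀ τ' ∈ T, psum n E τ' ≤ 2 * ((n : ℝ) - 2) - psum n E τ := by
          intro τ' hτ'
          have hev := (Finset.mem_filter.mp hτ').2
          have hprodO : ∏ i ∈ Finset.range (n - 1), (extb n τ i * extb n τ (i + 1)) = -1 := by
            rw [prod_telescope (extb n τ) (extb_sign n τ) (n - 1), hodd]
          have hprodE : ∏ i ∈ Finset.range (n - 1), (extb n τ' i * extb n τ' (i + 1)) = 1 := by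
            rw [prod_telescope (extb n τ') (extb_sign n τ') (n - 1), hev]
          have hex : ∃ i0 ∈ Finset.range (n - 1),
              extb n τ i0 * extb n τ (i0 + 1) ≠ extb n τ' i0 * extb n τ' (i0 + 1) := by
            by_contra hcon
            push_neg at hcon
            have heq : ∏ i ∈ Finset.range (n - 1), (extb n τ i * extb n τ (i + 1))
                = ∏ i ∈ Finset.range (n - 1), (extb n τ' i * extb n τ' (i + 1)) :=
              Finset.prod_congr rfl fun i hi => hcon i hi
            rw [hprodO, hprodE] at heq
            norm_num at heq
          obtain ⟨i0, hi0mem, hi0ne⟩ := hex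
          have dsg : ∀ (ρ : Fin n → Bool) (i : ℕ),
              extb n ρ i * extb n ρ (i + 1) = 1 ∨ extb n ρ i * extb n ρ (i + 1) = -1 := by
            intro ρ i
            rcases extb_sign n ρ i with h | h <;> rcases extb_sign n ρ (i + 1) with h' | h' <;>
              rw [h, h'] <;> norm_num
          have hsum : psum n E τ' + psum n E τ = ∑ i ∈ Finset.range (n - 1),
              (extb n τ' i * extb n τ' (i + 1) * E i + extb n τ i * extb n τ (i + 1) * E i) := by
            rw [psum, psum, ← Finset.sum_add_distrib]
          have habs : ∀ i, i < n - 1 → |E i| ≤ 1 := fun i hi => (hV i (by omega)).absE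
          have hzero : extb n τ' i0 * extb n τ' (i0 + 1) * E i0
              + extb n τ i0 * extb n τ (i0 + 1) * E i0 = 0 := by
            rcases dsg τ i0 with h | h <;> rcases dsg τ' i0 with h' | h' <;> rw [h, h']
            · exact absurd (h.trans h'.symm) hi0ne
            · ring
            · ring
            · exact absurd (h.trans h'.symm) hi0ne
          have hbound : ∑ i ∈ (Finset.range (n - 1)).erase i0,
              (extb n τ' i * extb n τ' (i + 1) * E i + extb n τ i * extb n τ (i + 1) * E i)
              ≤ ∑ _i ∈ (Finset.range (n - 1)).erase i0, (2 : ℝ) := by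
            refine Finset.sum_le_sum fun i hi => ?_
            have hir : i < n - 1 := Finset.mem_range.mp (Finset.mem_of_mem_erase hi)
            have hE := abs_le.mp (habs i hir)
            rcases dsg τ i with h | h <;> rcases dsg τ' i with h' | h' <;> rw [h, h'] <;> linarith
          have hcard : ((Finset.range (n - 1)).erase i0).card = n - 2 := by
            rw [Finset.card_erase_of_mem hi0mem, Finset.card_range]
            omega
          have hc2 : (((n : ℕ) - 2 : ℕ) : ℝ) = (n : ℝ) - 2 := by
            have : (2 : ℕ) ≤ n := by omega
            push_cast [this]
            ring
          calc psum n E τ' ≤ psum n E τ' + psum n E τ - psum n E τ := le_of_eq (by ring)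
            _ ≤ 2 * ((n : ℝ) - 2) - psum n E τ := by
                rw [hsum, ← Finset.add_sum_erase _ _ hi0mem, hzero, zero_add]
                have := hbound
                rw [Finset.sum_const, hcard, nsmul_eq_mul, hc2] at this
                linarith
        have hS : Smax ≤ 2 * ((n : ℝ) - 2) - psum n E τ := Finset.sup'_le _ _ hpair
        linarith
    -- validity of the new chord box
    have hVnew : Vedge (m (n - 1)) (m 0) E3 := by
      refine ⟨?_, ?_, ?_, ?_⟩
      · linarith [neg_abs_le (m (n - 1) + m 0), hLo3]
      · linarith [neg_abs_le (m (n - 1) - m 0), hU3]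
      · linarith [le_abs_self (m (n - 1) - m 0), hU3]
      · linarith [le_abs_self (m (n - 1) + m 0), hLo3]
    -- reduced cycle data
    set E' : ℕ → ℝ := fun i => if i = n - 1 then E3 else E i with hE'
    have hV' : ∀ i, i < n - 1 → Vedge (m i) (m (i + 1)) (E' i) := by
      intro i hi
      rw [hE']; dsimp only; rw [if_neg (by omega)]
      exact hV i (by omega)
    have hVlast' : Vedge (m (n - 1)) (m 0) (E' (n - 1)) := by
      rw [hE']; dsimp only; rw [if_pos rfl]; exact hVnew
    have hC' : ∀ τr : ℕ → ℝ, (∀ i, τr i = 1 ∨ τr i = -1) →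
        (∑ i ∈ Finset.range (n - 1), τr i * τr (i + 1) * E' i)
          - τr (n - 1) * τr 0 * E' (n - 1) ≤ (n : ℝ) - 2 := by
      intro τr hτr
      set τb : Fin n → Bool := fun i => if τr i.1 = 1 then true else false with hτb
      have hext : ∀ i, i < n → extb n τb i = τr i := by
        intro i h
        rw [extb_lt n τb i h, hτb]
        rcases hτr i with hv | hv
        · dsimp only; rw [if_pos hv, hv]; simp [sg]
        · dsimp only; rw [if_neg (by rw [hv]; norm_num), hv]; simp [sg]
      have hsum' : ∑ i ∈ Finset.range (n - 1), τr i * τr (i + 1) * E' i = psum n E τb := by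
        rw [psum]
        refine Finset.sum_congr rfl fun i hi => ?_
        rw [Finset.mem_range] at hi
        rw [hext i (by omega), hext (i + 1) (by omega), hE']
        dsimp only; rw [if_neg (by omega)]
      have h0 : τr 0 = extb n τb 0 := (hext 0 (by omega)).symm
      have h1 : τr (n - 1) = extb n τb (n - 1) := (hext (n - 1) (by omega)).symm
      rw [hsum', hE']; dsimp only; rw [if_pos rfl, h0, h1]
      rcases extb_sign n τb 0 with s0 | s0 <;> rcases extb_sign n τb (n - 1) with s1 | s1 <;>
        rw [s0, s1]
      · have hmem : τb ∈ T := by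
          rw [hT, Finset.mem_filter]
          exact ⟨Finset.mem_univ _, by rw [s0, s1]; norm_num⟩
        have := hLoS τb hmem; linarith
      · have := hD τb (by rw [s0, s1]; norm_num); linarith
      · have := hD τb (by rw [s0, s1]; norm_num); linarith
      · have hmem : τb ∈ T := by
          rw [hT, Finset.mem_filter]
          exact ⟨Finset.mem_univ _, by rw [s0, s1]; norm_num⟩
        have := hLoS τb hmem; linarith
    obtain ⟨q', hq'0, hq'tot, hq'mar, hq'last⟩ := ih m E' hV' hVlast' hC'
    have hq'mar2 : ∀ j l : Fin n, l.1 = j.1 + 1 → ∀ a b : Bool,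
        mar q' j l a b = pbox (m j.1) (m (j.1 + 1)) (E j.1) a b := by
      intro j l hjl a b
      rw [hq'mar j l hjl a b, hE']; dsimp only
      rw [if_neg (by have := l.2; omega)]
    have hq'last2 : ∀ j l : Fin n, j.1 = n - 1 → l.1 = 0 → ∀ a b : Bool,
        mar q' j l a b = pbox (m (n - 1)) (m 0) E3 a b := by
      intro j l hj hl a b
      rw [hq'last j l hj hl a b, hE']; dsimp only
      rw [if_pos rfl]
    -- triangle joint
    obtain ⟨r, hr0, hr12, hr23, hr31⟩ := tri_exists (m (n - 1)) (m n) (m 0) (E (n - 1)) (E n) E3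
      ⟨va1, va2, va3, va4⟩ ⟨vb1, vb2, vb3, vb4⟩ hVnew
      (by linarith [hLo1, neg_abs_le (E (n - 1) + E n)])
      (by linarith [hU1, neg_abs_le (E (n - 1) - E n)])
      (by linarith [hU1, le_abs_self (E (n - 1) - E n)])
      (by linarith [hLo1, le_abs_self (E (n - 1) + E n)])
    have c1 : n - 1 < n + 1 := by omega
    have c2 : n < n + 1 := by omega
    have c3 : 0 < n + 1 := by omega
    have d1 : n - 1 < n := by omega
    have d2 : 0 < n := by omega
    have hsnn : ∀ a c : Bool, 0 ≤ pbox (m (n - 1)) (m 0) E3 a c := hVnew.nonneg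
    have hrle : ∀ a b c : Bool, r a b c ≤ pbox (m (n - 1)) (m 0) E3 a c := by
      intro a b c
      have h31 := hr31 a c
      cases b
      · linarith [hr0 a true c]
      · linarith [hr0 a false c]
    have hq'le : ∀ g : Fin n → Bool,
        q' g ≤ pbox (m (n - 1)) (m 0) E3 (g ⟨n - 1, d1⟩) (g ⟨0, d2⟩) := by
      intro g
      have step : q' g ≤ mar q' ⟨n - 1, d1⟩ ⟨0, d2⟩ (g ⟨n - 1, d1⟩) (g ⟨0, d2⟩) := by
        rw [mar]
        calc q' g = (if g ⟨n - 1, d1⟩ = g ⟨n - 1, d1⟩ ∧ g ⟨0, d2⟩ = g ⟨0, d2⟩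
              then q' g else 0) := by rw [if_pos ⟨rfl, rfl⟩]
          _ ≤ _ := Finset.single_le_sum
              (f := fun f => if f ⟨n - 1, d1⟩ = g ⟨n - 1, d1⟩ ∧ f ⟨0, d2⟩ = g ⟨0, d2⟩
                then q' f else 0)
              (fun f _ => by split <;> [exact hq'0 f; exact le_refl 0])
              (Finset.mem_univ g)
      rw [hq'last2 ⟨n - 1, d1⟩ ⟨0, d2⟩ rfl rfl] at step
      exact step
    set q : (Fin (n + 1) → Bool) → ℝ := fun f =>
      if pbox (m (n - 1)) (m 0) E3 (f ⟨n - 1, c1⟩) (f ⟨0, c3⟩) = 0 then 0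
      else q' (fun i => f i.castSucc) * r (f ⟨n - 1, c1⟩) (f ⟨n, c2⟩) (f ⟨0, c3⟩)
        / pbox (m (n - 1)) (m 0) E3 (f ⟨n - 1, c1⟩) (f ⟨0, c3⟩) with hqdef
    have sInit : ∀ (g : Fin n → Bool) (v : Bool),
        (fun i : Fin n => (Fin.snoc g v : Fin (n + 1) → Bool) i.castSucc) = g := by
      intro g v; funext i; rw [Fin.snoc_castSucc]
    have hqapp : ∀ (g : Fin n → Bool) (v : Bool),
        q (Fin.snoc g v) = if pbox (m (n - 1)) (m 0) E3 (g ⟨n - 1, d1⟩) (g ⟨0, d2⟩) = 0 then 0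
          else q' g * r (g ⟨n - 1, d1⟩) v (g ⟨0, d2⟩)
            / pbox (m (n - 1)) (m 0) E3 (g ⟨n - 1, d1⟩) (g ⟨0, d2⟩) := by
      intro g v
      rw [hqdef]
      dsimp only
      rw [snoc_lt g v (n - 1) d1 c1, snoc_lt g v 0 d2 c3, snoc_top g v c2, sInit]
    have hkey : ∀ g : Fin n → Bool, ∑ v : Bool, q (Fin.snoc g v) = q' g := by
      intro g
      rw [Fintype.sum_bool, hqapp, hqapp]
      by_cases hz : pbox (m (n - 1)) (m 0) E3 (g ⟨n - 1, d1⟩) (g ⟨0, d2⟩) = 0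
      · rw [if_pos hz, if_pos hz]
        have hle := hq'le g
        rw [hz] at hle
        have := hq'0 g
        linarith
      · rw [if_neg hz, if_neg hz, ← add_div,
          show q' g * r (g ⟨n - 1, d1⟩) true (g ⟨0, d2⟩)
              + q' g * r (g ⟨n - 1, d1⟩) false (g ⟨0, d2⟩)
            = q' g * (r (g ⟨n - 1, d1⟩) true (g ⟨0, d2⟩)
              + r (g ⟨n - 1, d1⟩) false (g ⟨0, d2⟩)) by ring,
          hr31, mul_div_assoc, div_self hz, mul_one]
    have hqnn : ∀ f, 0 ≤ q f := by
      intro f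
      rw [hqdef]; dsimp only
      split
      · exact le_refl 0
      · exact div_nonneg (mul_nonneg (hq'0 _) (hr0 _ _ _)) (hsnn _ _)
    refine ⟨q, hqnn, ?_, ?_, ?_⟩
    · rw [sum_snoc]
      rw [Finset.sum_congr rfl fun g _ => hkey g]
      exact hq'tot
    · intro j l hjl a b
      rcases j with ⟨jv, hjv⟩
      rcases l with ⟨lv, hlv⟩
      simp only at hjl
      subst hjl
      by_cases hcase : jv < n - 1
      · have hjn : jv < n := by omega
        have hln : jv + 1 < n := by omega
        rw [mar, sum_snoc]
        have hg : ∀ g : Fin n → Bool, (∑ v : Bool,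
            if (Fin.snoc g v : Fin (n + 1) → Bool) ⟨jv, hjv⟩ = a
              ∧ (Fin.snoc g v : Fin (n + 1) → Bool) ⟨jv + 1, hlv⟩ = b
            then q (Fin.snoc g v) else 0)
            = if g ⟨jv, hjn⟩ = a ∧ g ⟨jv + 1, hln⟩ = b then q' g else 0 := by
          intro g
          calc (∑ v : Bool, if (Fin.snoc g v : Fin (n + 1) → Bool) ⟨jv, hjv⟩ = a
              ∧ (Fin.snoc g v : Fin (n + 1) → Bool) ⟨jv + 1, hlv⟩ = b
              then q (Fin.snoc g v) else 0)
              = ∑ v : Bool, if g ⟨jv, hjn⟩ = a ∧ g ⟨jv + 1, hln⟩ = b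
                then q (Fin.snoc g v) else 0 := by
                refine Finset.sum_congr rfl fun v _ => ?_
                rw [snoc_lt g v jv hjn hjv, snoc_lt g v (jv + 1) hln hlv]
            _ = if g ⟨jv, hjn⟩ = a ∧ g ⟨jv + 1, hln⟩ = b
                then (∑ v : Bool, q (Fin.snoc g v)) else 0 := sum_ite_const _
            _ = _ := by rw [hkey g]
        rw [Finset.sum_congr rfl fun g _ => hg g]
        exact hq'mar2 ⟨jv, hjn⟩ ⟨jv + 1, hln⟩ rfl a b
      · have hjeq : jv = n - 1 := by omega
        subst hjeq
        have hidx : (⟨n - 1 + 1, hlv⟩ : Fin (n + 1)) = ⟨n, c2⟩ := by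
          apply Fin.ext; simp [hn1]
        rw [hidx, hn1, mar, sum_snoc]
        have hg : ∀ g : Fin n → Bool, (∑ v : Bool,
            if (Fin.snoc g v : Fin (n + 1) → Bool) ⟨n - 1, hjv⟩ = a
              ∧ (Fin.snoc g v : Fin (n + 1) → Bool) ⟨n, c2⟩ = b
            then q (Fin.snoc g v) else 0)
            = if g ⟨n - 1, d1⟩ = a then q (Fin.snoc g b) else 0 := by
          intro g
          calc (∑ v : Bool,
              if (Fin.snoc g v : Fin (n + 1) → Bool) ⟨n - 1, hjv⟩ = a
                ∧ (Fin.snoc g v : Fin (n + 1) → Bool) ⟨n, c2⟩ = b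
              then q (Fin.snoc g v) else 0)
              = ∑ v : Bool, if g ⟨n - 1, d1⟩ = a ∧ v = b then q (Fin.snoc g v) else 0 := by
                refine Finset.sum_congr rfl fun v _ => ?_
                rw [snoc_lt g v (n - 1) d1 hjv, snoc_top g v c2]
            _ = _ := sum_collapse _ b _
        rw [Finset.sum_congr rfl fun g _ => hg g]
        rw [split_val (fun g => if g ⟨n - 1, d1⟩ = a then q (Fin.snoc g b) else 0) ⟨0, d2⟩]
        have hin : ∀ c : Bool, (∑ g : Fin n → Bool, if g ⟨0, d2⟩ = c
            then (if g ⟨n - 1, d1⟩ = a then q (Fin.snoc g b) else 0) else 0)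
            = (if pbox (m (n - 1)) (m 0) E3 a c = 0 then 0
                else r a b c / pbox (m (n - 1)) (m 0) E3 a c)
              * pbox (m (n - 1)) (m 0) E3 a c := by
          intro c
          have e1 : ∀ g : Fin n → Bool, (if g ⟨0, d2⟩ = c
              then (if g ⟨n - 1, d1⟩ = a then q (Fin.snoc g b) else 0) else 0)
              = (if pbox (m (n - 1)) (m 0) E3 a c = 0 then 0
                  else r a b c / pbox (m (n - 1)) (m 0) E3 a c)
                * (if g ⟨n - 1, d1⟩ = a ∧ g ⟨0, d2⟩ = c then q' g else 0) := by
            intro g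
            by_cases h1 : g ⟨0, d2⟩ = c
            · by_cases h2 : g ⟨n - 1, d1⟩ = a
              · rw [if_pos h1, if_pos h2,
                  if_pos (show g ⟨n - 1, d1⟩ = a ∧ g ⟨0, d2⟩ = c from ⟨h2, h1⟩),
                  hqapp g b, h1, h2]
                by_cases hz : pbox (m (n - 1)) (m 0) E3 a c = 0
                · rw [if_pos hz, if_pos hz]; ring
                · rw [if_neg hz, if_neg hz]; ring
              · rw [if_pos h1, if_neg h2,
                  if_neg (show ¬(g ⟨n - 1, d1⟩ = a ∧ g ⟨0, d2⟩ = c) from fun hh => h2 hh.1)]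
                ring
            · rw [if_neg h1,
                if_neg (show ¬(g ⟨n - 1, d1⟩ = a ∧ g ⟨0, d2⟩ = c) from fun hh => h1 hh.2)]
              ring
          rw [Finset.sum_congr rfl fun g _ => e1 g, ← Finset.mul_sum]
          congr 1
          exact hq'last2 ⟨n - 1, d1⟩ ⟨0, d2⟩ rfl rfl a c
        rw [Finset.sum_congr rfl fun c _ => hin c]
        have hterm : ∀ c : Bool, (if pbox (m (n - 1)) (m 0) E3 a c = 0 then 0
            else r a b c / pbox (m (n - 1)) (m 0) E3 a c) * pbox (m (n - 1)) (m 0) E3 a c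
            = r a b c := by
          intro c
          by_cases hz : pbox (m (n - 1)) (m 0) E3 a c = 0
          · rw [if_pos hz, hz, mul_zero]
            have h1 := hrle a b c
            rw [hz] at h1
            have h2 := hr0 a b c
            linarith
          · rw [if_neg hz, div_mul_cancel₀ _ hz]
        calc ∑ c : Bool, (if pbox (m (n - 1)) (m 0) E3 a c = 0 then 0
              else r a b c / pbox (m (n - 1)) (m 0) E3 a c) * pbox (m (n - 1)) (m 0) E3 a c
            = ∑ c : Bool, r a b c := Finset.sum_congr rfl fun c _ => hterm c
          _ = r a b true + r a b false := Fintype.sum_bool _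
          _ = pbox (m (n - 1)) (m n) (E (n - 1)) a b := hr12 a b
    · intro j l hj hl a b
      rcases j with ⟨jv, hjv⟩
      rcases l with ⟨lv, hlv⟩
      simp only at hj hl
      have hjK : (⟨jv, hjv⟩ : Fin (n + 1)) = ⟨n, c2⟩ := Fin.ext hj
      have hlL : (⟨lv, hlv⟩ : Fin (n + 1)) = ⟨0, c3⟩ := Fin.ext hl
      rw [hjK, hlL, mar, sum_snoc]
      have hg : ∀ g : Fin n → Bool, (∑ v : Bool,
          if (Fin.snoc g v : Fin (n + 1) → Bool) ⟨n, c2⟩ = a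
            ∧ (Fin.snoc g v : Fin (n + 1) → Bool) ⟨0, c3⟩ = b
          then q (Fin.snoc g v) else 0)
          = if g ⟨0, d2⟩ = b then q (Fin.snoc g a) else 0 := by
        intro g
        calc (∑ v : Bool,
            if (Fin.snoc g v : Fin (n + 1) → Bool) ⟨n, c2⟩ = a
              ∧ (Fin.snoc g v : Fin (n + 1) → Bool) ⟨0, c3⟩ = b
            then q (Fin.snoc g v) else 0)
            = ∑ v : Bool, if v = a ∧ g ⟨0, d2⟩ = b then q (Fin.snoc g v) else 0 := by
              refine Finset.sum_congr rfl fun v _ => ?_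
              rw [snoc_top g v c2, snoc_lt g v 0 d2 c3]
          _ = _ := sum_collapse' _ a _
      rw [Finset.sum_congr rfl fun g _ => hg g]
      rw [split_val (fun g => if g ⟨0, d2⟩ = b then q (Fin.snoc g a) else 0) ⟨n - 1, d1⟩]
      have hin : ∀ c : Bool, (∑ g : Fin n → Bool, if g ⟨n - 1, d1⟩ = c
          then (if g ⟨0, d2⟩ = b then q (Fin.snoc g a) else 0) else 0)
          = (if pbox (m (n - 1)) (m 0) E3 c b = 0 then 0
              else r c a b / pbox (m (n - 1)) (m 0) E3 c b)
            * pbox (m (n - 1)) (m 0) E3 c b := by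
        intro c
        have e1 : ∀ g : Fin n → Bool, (if g ⟨n - 1, d1⟩ = c
            then (if g ⟨0, d2⟩ = b then q (Fin.snoc g a) else 0) else 0)
            = (if pbox (m (n - 1)) (m 0) E3 c b = 0 then 0
                else r c a b / pbox (m (n - 1)) (m 0) E3 c b)
              * (if g ⟨n - 1, d1⟩ = c ∧ g ⟨0, d2⟩ = b then q' g else 0) := by
          intro g
          by_cases h1 : g ⟨n - 1, d1⟩ = c
          · by_cases h2 : g ⟨0, d2⟩ = b
            · rw [if_pos h1, if_pos h2,
                if_pos (show g ⟨n - 1, d1⟩ = c ∧ g ⟨0, d2⟩ = b from ⟨h1, h2⟩),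
                hqapp g a, h1, h2]
              by_cases hz : pbox (m (n - 1)) (m 0) E3 c b = 0
              · rw [if_pos hz, if_pos hz]; ring
              · rw [if_neg hz, if_neg hz]; ring
            · rw [if_pos h1, if_neg h2,
                if_neg (show ¬(g ⟨n - 1, d1⟩ = c ∧ g ⟨0, d2⟩ = b) from fun hh => h2 hh.2)]
              ring
          · rw [if_neg h1,
              if_neg (show ¬(g ⟨n - 1, d1⟩ = c ∧ g ⟨0, d2⟩ = b) from fun hh => h1 hh.1)]
            ring
        rw [Finset.sum_congr rfl fun g _ => e1 g, ← Finset.mul_sum]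
        congr 1
        exact hq'last2 ⟨n - 1, d1⟩ ⟨0, d2⟩ rfl rfl c b
      rw [Finset.sum_congr rfl fun c _ => hin c]
      have hterm : ∀ c : Bool, (if pbox (m (n - 1)) (m 0) E3 c b = 0 then 0
          else r c a b / pbox (m (n - 1)) (m 0) E3 c b) * pbox (m (n - 1)) (m 0) E3 c b
          = r c a b := by
        intro c
        by_cases hz : pbox (m (n - 1)) (m 0) E3 c b = 0
        · rw [if_pos hz, hz, mul_zero]
          have h1 := hrle c a b
          rw [hz] at h1
          have h2 := hr0 c a b
          linarith
        · rw [if_neg hz, div_mul_cancel₀ _ hz]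
      calc ∑ c : Bool, (if pbox (m (n - 1)) (m 0) E3 c b = 0 then 0
            else r c a b / pbox (m (n - 1)) (m 0) E3 c b) * pbox (m (n - 1)) (m 0) E3 c b
          = ∑ c : Bool, r c a b := Finset.sum_congr rfl fun c _ => hterm c
        _ = r true a b + r false a b := Fintype.sum_bool _
        _ = pbox (m n) (m 0) (E n) a b := hr23 a b

end NCyc



namespace NCyc

lemma sgn_eq_sg : sgn = sg := rfl

variable {n : ℕ} (hn : 3 ≤ n)

instance instFintypeJOcyc (γ : Finset (Fin n)) : Fintype ((cycleScenario n hn).JO γ) :=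
  instFintypeJO _ _

instance instFintypeElcyc (γ : Finset (Fin n)) : Fintype ((cycleScenario n hn).El γ) :=
  instFintypeEl _ _

instance instDecEqJOcyc (γ : Finset (Fin n)) : DecidableEq ((cycleScenario n hn).JO γ) :=
  instDecidableEqJO _ _

lemma cycSucc_cases (i : Fin n) :
    ((cycSucc i).1 = i.1 + 1 ∧ i.1 + 1 < n) ∨ ((cycSucc i).1 = 0 ∧ i.1 = n - 1) := by
  have hi := i.isLt
  by_cases h : i.1 + 1 < n
  · exact Or.inl ⟨Nat.mod_eq_of_lt h, h⟩
  · refine Or.inr ⟨?_, by omega⟩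
    show (i.1 + 1) % n = 0
    rw [show i.1 + 1 = n by omega, Nat.mod_self]

lemma cycSucc_cycSucc_ne (hn3 : 3 ≤ n) (i : Fin n) : cycSucc (cycSucc i) ≠ i := by
  intro h
  have h1 := congrArg Fin.val h
  have hi := i.isLt
  rcases cycSucc_cases (i := i) with ⟨e1, l1⟩ | ⟨e1, l1⟩ <;>
    rcases cycSucc_cases (i := cycSucc i) with ⟨e2, l2⟩ | ⟨e2, l2⟩ <;> omega

lemma mem_xi (i : Fin n) : i ∈ cycCtx i := Finset.mem_insert_self _ _

lemma mem_xs (i : Fin n) : cycSucc i ∈ cycCtx i := by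
  simp [cycCtx]

/-- first measurement of context `i` as an element -/
def xi (i : Fin n) : (cycleScenario n hn).El (cycCtx i) := ⟨i, mem_xi i⟩

/-- second measurement of context `i` as an element -/
def xs (i : Fin n) : (cycleScenario n hn).El (cycCtx i) := ⟨cycSucc i, mem_xs i⟩

/-- joint outcome of context `i` assigning `a` to `x_i` and `b` to `x_{i+1}` -/
def pairJO (i : Fin n) (a b : Bool) : (cycleScenario n hn).JO (cycCtx i) :=
  fun x => @ite _ (@Eq (Fin n) x.1 i) (instDecidableEqFin n _ _) a b

lemma pairJO_xi (i : Fin n) (a b : Bool) : pairJO hn i a b (xi hn i) = a := if_pos rfl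

lemma pairJO_xs (i : Fin n) (a b : Bool) : pairJO hn i a b (xs hn i) = b :=
  if_neg (fun h => cycSucc_ne hn i h.symm)

lemma JO_eq (i : Fin n) (t : (cycleScenario n hn).JO (cycCtx i)) :
    t = pairJO hn i (t (xi hn i)) (t (xs hn i)) := by
  funext x
  rcases x with ⟨x, hx⟩
  rcases Finset.mem_insert.mp hx with h | h
  · subst h
    exact (pairJO_xi hn x _ _).symm
  · replace h : x = cycSucc i := Finset.mem_singleton.mp h
    subst h
    exact (pairJO_xs hn _ _ _).symm

/-- Bool × Bool parametrizes the joint outcomes of a context -/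
def pairEquiv (i : Fin n) : Bool × Bool ≃ (cycleScenario n hn).JO (cycCtx i) where
  toFun p := pairJO hn i p.1 p.2
  invFun t := (t (xi hn i), t (xs hn i))
  left_inv p := by
    apply Prod.ext
    · simp [pairJO_xi hn i]
    · simp [pairJO_xs hn i]
  right_inv t := (JO_eq hn i t).symm

lemma sum_JO (i : Fin n) (F : (cycleScenario n hn).JO (cycCtx i) → ℝ) :
    ∑ t, F t = ∑ a : Bool, ∑ b : Bool, F (pairJO hn i a b) := by
  rw [← Equiv.sum_comp (pairEquiv hn i) F, Fintype.sum_prod_type]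
  rfl

lemma prod_sgn_pair (i : Fin n) (a b : Bool) :
    (∏ x : (cycleScenario n hn).El (cycCtx i), sgn (pairJO hn i a b x)) = sgn a * sgn b := by
  have h1 : (∏ x : (cycleScenario n hn).El (cycCtx i), sgn (pairJO hn i a b x))
      = ∏ x ∈ cycCtx i, sgn (if x = i then a else b) := by
    rw [← Finset.prod_coe_sort (cycCtx i) (fun x => sgn (if x = i then a else b))]
    rfl
  rw [h1]
  rw [show cycCtx i = {i, cycSucc i} from rfl,
    Finset.prod_pair (cycSucc_ne hn i)]
  rw [if_pos rfl, if_neg (fun h => cycSucc_ne hn i h.symm)]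

lemma prod_pm {k : ℕ} (c : Fin k → ℝ) (h : ∀ i, c i = 1 ∨ c i = -1) :
    ∏ i, c i = (-1 : ℝ) ^ (Finset.univ.filter fun i => c i = -1).card := by
  rw [← Finset.prod_filter_mul_prod_filter_not Finset.univ (fun i => c i = -1) c]
  have h1 : ∏ i ∈ Finset.univ.filter (fun i => c i = -1), c i
      = (-1 : ℝ) ^ (Finset.univ.filter fun i => c i = -1).card := by
    rw [Finset.prod_congr rfl (fun i hi => (Finset.mem_filter.mp hi).2), Finset.prod_const]
  have h2 : ∏ i ∈ Finset.univ.filter (fun i => ¬(c i = -1)), c i = 1 := by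
    refine Finset.prod_eq_one fun i hi => ?_
    have := (Finset.mem_filter.mp hi).2
    rcases h i with hc | hc
    · exact hc
    · exact absurd hc this
  rw [h1, h2, mul_one]

lemma odd_iff_prod {k : ℕ} (a : Fin k → ℤ) (hs : IsSign a) :
    IsOddSign a ↔ ∏ i, ((a i : ℤ) : ℝ) = -1 := by
  have hpm : ∀ i, ((a i : ℤ) : ℝ) = 1 ∨ ((a i : ℤ) : ℝ) = -1 := by
    intro i; rcases hs i with h | h <;> rw [h] <;> norm_num
  rw [prod_pm _ hpm]
  have hset : (Finset.univ.filter fun i => ((a i : ℤ) : ℝ) = -1)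
      = (Finset.univ.filter fun i => a i = -1) := by
    refine Finset.filter_congr fun i _ => ?_
    constructor
    · intro h; exact_mod_cast h
    · intro h; exact_mod_cast congrArg (fun z : ℤ => (z : ℝ)) h
  rw [hset]
  unfold IsOddSign
  constructor
  · intro h; exact Odd.neg_one_pow h
  · intro h
    rcases Nat.even_or_odd (Finset.univ.filter fun i => a i = -1).card with he | ho
    · rw [he.neg_one_pow] at h; norm_num at h
    · exact ho

lemma unique_violation {k : ℕ} (E : Fin k → ℝ) (hE : ∀ i, |E i| ≤ 1)
    (a a' : Fin k → ℤ) (hs : IsSign a) (hs' : IsSign a') (ho : IsOddSign a) (ho' : IsOddSign a')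
    (hv : (k : ℝ) - 2 < ∑ i, (a i : ℝ) * E i) (hv' : (k : ℝ) - 2 < ∑ i, (a' i : ℝ) * E i) :
    a = a' := by
  classical
  by_contra hne
  have hDne : (Finset.univ.filter fun i => a i ≠ a' i).Nonempty := by
    rcases Function.ne_iff.mp hne with ⟨i, hi⟩
    exact ⟨i, Finset.mem_filter.mpr ⟨Finset.mem_univ _, hi⟩⟩
  have hpm : ∀ i, (a i : ℝ) * (a' i : ℝ) = 1 ∨ (a i : ℝ) * (a' i : ℝ) = -1 := by
    intro i; rcases hs i with h | h <;> rcases hs' i with h' | h' <;> rw [h, h'] <;> norm_num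
  have hprod1 : ∏ i, ((a i : ℝ) * (a' i : ℝ)) = 1 := by
    rw [Finset.prod_mul_distrib, (odd_iff_prod a hs).mp ho, (odd_iff_prod a' hs').mp ho']
    norm_num
  have hset : (Finset.univ.filter fun i => (a i : ℝ) * (a' i : ℝ) = -1)
      = (Finset.univ.filter fun i => a i ≠ a' i) := by
    refine Finset.filter_congr fun i _ => ?_
    rcases hs i with h | h <;> rcases hs' i with h' | h' <;> rw [h, h'] <;> norm_num <;> decide
  have hcard : Even (Finset.univ.filter fun i => a i ≠ a' i).card := by
    rw [prod_pm _ hpm, hset] at hprod1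
    rcases Nat.even_or_odd (Finset.univ.filter fun i => a i ≠ a' i).card with he | ho2
    · exact he
    · rw [ho2.neg_one_pow] at hprod1; norm_num at hprod1
  have hD2 : 2 ≤ (Finset.univ.filter fun i => a i ≠ a' i).card := by
    rcases hcard with ⟨c, hc⟩
    have h0 : 0 < (Finset.univ.filter fun i => a i ≠ a' i).card := Finset.card_pos.mpr hDne
    omega
  have hzero : ∑ i ∈ Finset.univ.filter (fun i => a i ≠ a' i),
      ((a i : ℝ) + (a' i : ℝ)) * E i = 0 := by
    refine Finset.sum_eq_zero fun i hi => ?_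
    have hne2 := (Finset.mem_filter.mp hi).2
    rcases hs i with h | h <;> rcases hs' i with h' | h' <;> rw [h, h']
    · exact absurd (h.trans h'.symm) hne2
    · norm_num
    · norm_num
    · exact absurd (h.trans h'.symm) hne2
  have hbnd : ∑ i ∈ Finset.univ.filter (fun i => ¬(a i ≠ a' i)),
      ((a i : ℝ) + (a' i : ℝ)) * E i
      ≤ (Finset.univ.filter fun i => ¬(a i ≠ a' i)).card • (2 : ℝ) := by
    refine Finset.sum_le_card_nsmul _ _ _ fun i hi => ?_
    have hEi := abs_le.mp (hE i)
    rcases hs i with h | h <;> rcases hs' i with h' | h' <;> rw [h, h'] <;> push_cast <;> linarith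
  have hcards := Finset.card_filter_add_card_filter_not
    (s := (Finset.univ : Finset (Fin k))) (p := fun i => a i ≠ a' i)
  rw [Finset.card_univ, Fintype.card_fin] at hcards
  have hsplit := Finset.sum_filter_add_sum_filter_not Finset.univ (fun i => a i ≠ a' i)
    (fun i => ((a i : ℝ) + (a' i : ℝ)) * E i)
  have htotal : ∑ i, ((a i : ℝ) + (a' i : ℝ)) * E i
      = ∑ i, (a i : ℝ) * E i + ∑ i, (a' i : ℝ) * E i := by
    rw [← Finset.sum_add_distrib]
    exact Finset.sum_congr rfl fun i _ => by ring
  have hcast : ((Finset.univ.filter fun i => ¬(a i ≠ a' i)).card : ℝ) ≤ (k : ℝ) - 2 := by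
    have : (Finset.univ.filter fun i => ¬(a i ≠ a' i)).card ≤ k - 2 := by omega
    have hk2 : 2 ≤ k := by
      have hle := Finset.card_filter_le (Finset.univ : Finset (Fin k)) (fun i => a i ≠ a' i)
      rw [Finset.card_univ, Fintype.card_fin] at hle
      omega
    calc ((Finset.univ.filter fun i => ¬(a i ≠ a' i)).card : ℝ)
        ≤ ((k - 2 : ℕ) : ℝ) := by exact_mod_cast this
      _ = (k : ℝ) - 2 := by push_cast [hk2]; ring
  rw [nsmul_eq_mul] at hbnd
  linarith [hsplit, htotal]

end NCyc

/-- every contextual nondisturbing behavior on the `n`-cycle scenario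
violates exactly one of the `n`-cycle noncontextuality inequalities. -/
theorem statement_4 (n : ℕ) (hn : 3 ≤ n) (B : Behavior (cycleScenario n hn))
    (hProb : IsProb _ B) (hND : IsND _ B) (hNC : ¬ IsNC _ B) :
    ∃! a : Fin n → ℤ, IsSign a ∧ IsOddSign a ∧ (n : ℝ) - 2 < Ifun hn a B := by
  classical
  set P : Fin n → Bool → Bool → ℝ :=
    fun i a b => B (cycCtxC hn i) (NCyc.pairJO hn i a b) with hP
  have hPnn : ∀ i a b, 0 ≤ P i a b := fun i a b => (hProb (cycCtxC hn i)).1 _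
  have hPtot : ∀ i, P i true true + P i true false + (P i false true + P i false false) = 1 := by
    intro i
    have h : ∑ t : (cycleScenario n hn).JO (cycCtx i), B (cycCtxC hn i) t = 1 :=
      (hProb (cycCtxC hn i)).2
    have h' := (NCyc.sum_JO hn i (B (cycCtxC hn i))).symm.trans h
    simpa [Fintype.sum_bool] using h'
  set M0 : Fin n → ℝ :=
    fun i => P i true true + P i true false - P i false true - P i false false with hM0
  set M1 : Fin n → ℝ :=
    fun i => P i true true - P i true false + P i false true - P i false false with hM1
  set Ecor : Fin n → ℝ :=
    fun i => P i true true - P i true false - P i false true + P i false false with hEcor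
  have hEc : ∀ i, corrCtx B (cycCtxC hn i) = Ecor i := by
    intro i
    have h : corrCtx B (cycCtxC hn i)
        = ∑ t : (cycleScenario n hn).JO (cycCtx i),
            (∏ x, sgn (t x)) * B (cycCtxC hn i) t := rfl
    rw [h, NCyc.sum_JO hn i (fun t => (∏ x, sgn (t x)) * B (cycCtxC hn i) t)]
    simp only [NCyc.prod_sgn_pair hn i, Fintype.sum_bool]
    rw [hEcor]
    simp [sgn]
    ring
  have hrep : ∀ i a b, P i a b = NCyc.pbox (M0 i) (M1 i) (Ecor i) a b := by
    intro i a b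
    have ht := hPtot i
    cases a <;> cases b <;>
      simp only [NCyc.pbox, NCyc.sg, hM0, hM1, hEcor, if_true, if_false, Bool.false_eq_true] <;>
      push_cast <;> linarith
  -- no-disturbance gives matching marginals
  have hmarg : ∀ (i : Fin n) (c : Bool),
      P i true c + P i false c = P (cycSucc i) c true + P (cycSucc i) c false := by
    intro i c
    have hmem : cycSucc i ∈ cycCtx i ∩ cycCtx (cycSucc i) :=
      Finset.mem_inter.mpr ⟨NCyc.mem_xs i, NCyc.mem_xi (cycSucc i)⟩
    have hnoti : ¬((cycSucc i : Fin n) = i) := fun h => cycSucc_ne hn i h.symm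
    have hval : ∀ x : Fin n, x ∈ cycCtx i ∩ cycCtx (cycSucc i) → x = cycSucc i := by
      intro x hx
      obtain ⟨hx1, hx2⟩ := Finset.mem_inter.mp hx
      rcases Finset.mem_insert.mp hx1 with h1 | h1
      · rcases Finset.mem_insert.mp hx2 with h2 | h2
        · exact h2
        · rw [Finset.mem_singleton] at h2
          exact absurd (h2 ▸ h1 ▸ rfl : cycSucc (cycSucc i) = x)
            (by rw [h1]; exact NCyc.cycSucc_cycSucc_ne hn i)
      · rwa [Finset.mem_singleton] at h1
    have h : (∑ t : (cycleScenario n hn).JO (cycCtx i),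
        if Scenario.restr2 (cycleScenario n hn)
            (Finset.inter_subset_left (s₁ := cycCtx i) (s₂ := cycCtx (cycSucc i))) t
          = (fun _ => c) then B (cycCtxC hn i) t else 0)
        = (∑ t : (cycleScenario n hn).JO (cycCtx (cycSucc i)),
        if Scenario.restr2 (cycleScenario n hn)
            (Finset.inter_subset_right (s₁ := cycCtx i) (s₂ := cycCtx (cycSucc i))) t
          = (fun _ => c) then B (cycCtxC hn (cycSucc i)) t else 0) :=
      Eq.trans (Finset.sum_congr rfl fun t _ => by congr)
        ((hND (cycCtxC hn i) (cycCtxC hn (cycSucc i)) (fun _ => c)).trans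
          (Finset.sum_congr rfl fun t _ => by congr))
    have hL : (∑ t : (cycleScenario n hn).JO (cycCtx i),
        if Scenario.restr2 (cycleScenario n hn)
            (Finset.inter_subset_left (s₁ := cycCtx i) (s₂ := cycCtx (cycSucc i))) t
          = (fun _ => c) then B (cycCtxC hn i) t else 0)
        = P i true c + P i false c := by
      rw [NCyc.sum_JO hn i]
      have hcond : ∀ a b : Bool,
          ((Scenario.restr2 (cycleScenario n hn)
            (Finset.inter_subset_left (s₁ := cycCtx i) (s₂ := cycCtx (cycSucc i)))
            (NCyc.pairJO hn i a b) = fun _ => c)) ↔ b = c := by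
        intro a b
        constructor
        · intro heq
          have h2 := congrFun heq ⟨cycSucc i, hmem⟩
          simp [Scenario.restr2, NCyc.pairJO, hnoti] at h2; exact h2
        · intro hbc
          funext x
          have hx := hval x.1 x.2
          simp [Scenario.restr2, NCyc.pairJO, hx, hnoti, hbc]; rfl
      rw [Finset.sum_congr rfl fun a _ => Finset.sum_congr rfl fun b _ =>
        if_congr (hcond a b) rfl rfl]
      cases c <;> simp [Fintype.sum_bool] <;> ring
    have hR : (∑ t : (cycleScenario n hn).JO (cycCtx (cycSucc i)),
        if Scenario.restr2 (cycleScenario n hn)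
            (Finset.inter_subset_right (s₁ := cycCtx i) (s₂ := cycCtx (cycSucc i))) t
          = (fun _ => c) then B (cycCtxC hn (cycSucc i)) t else 0)
        = P (cycSucc i) c true + P (cycSucc i) c false := by
      rw [NCyc.sum_JO hn (cycSucc i)]
      have hcond : ∀ a b : Bool,
          ((Scenario.restr2 (cycleScenario n hn)
            (Finset.inter_subset_right (s₁ := cycCtx i) (s₂ := cycCtx (cycSucc i)))
            (NCyc.pairJO hn (cycSucc i) a b) = fun _ => c)) ↔ a = c := by
        intro a b
        constructor
        · intro heq
          have h2 := congrFun heq ⟨cycSucc i, hmem⟩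
          simp [Scenario.restr2, NCyc.pairJO] at h2; exact h2
        · intro hac
          funext x
          have hx := hval x.1 x.2
          simp [Scenario.restr2, NCyc.pairJO, hx, hac]; rfl
      rw [Finset.sum_congr rfl fun a _ => Finset.sum_congr rfl fun b _ =>
        if_congr (hcond a b) rfl rfl]
      cases c <;> simp [Fintype.sum_bool] <;> ring
    rw [hL, hR] at h
    exact h
  have hndM : ∀ i, M1 i = M0 (cycSucc i) := by
    intro i
    have h1 := hmarg i true
    have h2 := hmarg i false
    simp only [hM0, hM1]
    linarith
  -- edge validity
  have hVedge : ∀ i : Fin n, NCyc.Vedge (M0 i) (M1 i) (Ecor i) := by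
    intro i
    apply NCyc.Vedge_of_nonneg
    intro a b
    rw [← hrep i a b]
    exact hPnn i a b
  set mm : ℕ → ℝ := fun k => if h : k < n then M0 ⟨k, h⟩ else 0 with hmm
  set EE : ℕ → ℝ := fun k => if h : k < n then Ecor ⟨k, h⟩ else 0 with hEE
  have hmmv : ∀ (k : ℕ) (h : k < n), mm k = M0 ⟨k, h⟩ := fun k h => dif_pos h
  have hEEv : ∀ (k : ℕ) (h : k < n), EE k = Ecor ⟨k, h⟩ := fun k h => dif_pos h
  have hsuccval : ∀ (k : ℕ) (hk : k < n) (h : k + 1 < n),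
      cycSucc (⟨k, hk⟩ : Fin n) = ⟨k + 1, h⟩ := by
    intro k hk h
    apply Fin.ext
    exact Nat.mod_eq_of_lt h
  have hsucclast : ∀ hk : n - 1 < n, cycSucc (⟨n - 1, hk⟩ : Fin n) = ⟨0, by omega⟩ := by
    intro hk
    apply Fin.ext
    show (n - 1 + 1) % n = 0
    rw [show n - 1 + 1 = n by omega, Nat.mod_self]
  have hVcore : ∀ k, k < n - 1 → NCyc.Vedge (mm k) (mm (k + 1)) (EE k) := by
    intro k hk
    rw [hmmv k (by omega), hmmv (k + 1) (by omega), hEEv k (by omega)]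
    have h := hVedge ⟨k, by omega⟩
    rwa [hndM ⟨k, by omega⟩, hsuccval k (by omega) (by omega)] at h
  have hVlastcore : NCyc.Vedge (mm (n - 1)) (mm 0) (EE (n - 1)) := by
    rw [hmmv (n - 1) (by omega), hmmv 0 (by omega), hEEv (n - 1) (by omega)]
    have h := hVedge ⟨n - 1, by omega⟩
    rwa [hndM ⟨n - 1, by omega⟩, hsucclast (by omega)] at h
  have hIfun : ∀ a : Fin n → ℤ, Ifun hn a B = ∑ i : Fin n, (a i : ℝ) * Ecor i := by
    intro a
    exact Finset.sum_congr rfl fun i _ => by rw [hEc i]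
  -- existence
  have hex : ∃ a : Fin n → ℤ, IsSign a ∧ IsOddSign a ∧ (n : ℝ) - 2 < Ifun hn a B := by
    by_contra hcon
    push_neg at hcon
    apply hNC
    have hCcore : ∀ τ : ℕ → ℝ, (∀ i, τ i = 1 ∨ τ i = -1) →
        (∑ i ∈ Finset.range (n - 1), τ i * τ (i + 1) * EE i)
          - τ (n - 1) * τ 0 * EE (n - 1) ≤ (n : ℝ) - 2 := by
      intro τ hτ
      set aZ : Fin n → ℤ := fun i => if i.1 < n - 1 then (if τ i.1 = τ (i.1 + 1) then 1 else -1)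
        else (if τ (n - 1) = τ 0 then -1 else 1) with haZ
      have hsZ : IsSign aZ := by
        intro i
        rw [haZ]; dsimp only
        split <;> split <;> simp
      have hcastZ : ∀ i : Fin n, (aZ i : ℝ)
          = (if i.1 < n - 1 then τ i.1 * τ (i.1 + 1) else -(τ (n - 1) * τ 0)) := by
        intro i
        rw [haZ]; dsimp only
        split
        · rcases hτ i.1 with h1 | h1 <;> rcases hτ (i.1 + 1) with h2 | h2 <;>
            rw [h1, h2] <;> norm_num
        · rcases hτ (n - 1) with h1 | h1 <;> rcases hτ 0 with h2 | h2 <;>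
            rw [h1, h2] <;> norm_num
      have hoZ : IsOddSign aZ := by
        rw [NCyc.odd_iff_prod aZ hsZ]
        have hg : ∀ i : Fin n, ((aZ i : ℤ) : ℝ)
            = (fun k => if k < n - 1 then τ k * τ (k + 1) else -(τ (n - 1) * τ 0)) i.1 :=
          fun i => hcastZ i
        rw [Finset.prod_congr rfl (fun i _ => hg i),
          Fin.prod_univ_eq_prod_range (fun k => if k < n - 1 then τ k * τ (k + 1)
            else -(τ (n - 1) * τ 0)) n]
        have hsp : ∏ k ∈ Finset.range n, (if k < n - 1 then τ k * τ (k + 1)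
            else -(τ (n - 1) * τ 0))
            = (∏ k ∈ Finset.range (n - 1), τ k * τ (k + 1)) * -(τ (n - 1) * τ 0) := by
          rw [show Finset.range n = Finset.range (n - 1 + 1) by congr 1; omega]
          rw [Finset.prod_range_succ, if_neg (by omega)]
          congr 1
          exact Finset.prod_congr rfl fun k hk => if_pos (Finset.mem_range.mp hk)
        rw [hsp, NCyc.prod_telescope τ hτ (n - 1)]
        rcases hτ 0 with h0 | h0 <;> rcases hτ (n - 1) with h1 | h1 <;>
          rw [h0, h1] <;> try norm_num
      have hmain := hcon aZ hsZ hoZ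
      rw [hIfun] at hmain
      have hterm : ∀ i : Fin n, (aZ i : ℝ) * Ecor i
          = (fun k => if k < n - 1 then τ k * τ (k + 1) * EE k
              else -(τ (n - 1) * τ 0 * EE (n - 1))) i.1 := by
        intro i
        rw [hcastZ i]
        have hEi : Ecor i = EE i.1 := by rw [hEEv i.1 i.isLt, Fin.eta]
        dsimp only
        split
        · rw [hEi]
        · have h1 : i.1 = n - 1 := by have := i.isLt; omega
          rw [hEi, h1]; ring
      rw [Finset.sum_congr rfl (fun i _ => hterm i),
        Fin.sum_univ_eq_sum_range (fun k => if k < n - 1 then τ k * τ (k + 1) * EE k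
          else -(τ (n - 1) * τ 0 * EE (n - 1))) n] at hmain
      have hsp : ∑ k ∈ Finset.range n, (if k < n - 1 then τ k * τ (k + 1) * EE k
          else -(τ (n - 1) * τ 0 * EE (n - 1)))
          = (∑ k ∈ Finset.range (n - 1), τ k * τ (k + 1) * EE k)
            - τ (n - 1) * τ 0 * EE (n - 1) := by
        rw [show Finset.range n = Finset.range (n - 1 + 1) by congr 1; omega]
        rw [Finset.sum_range_succ, if_neg (by omega)]
        have h1 : ∑ k ∈ Finset.range (n - 1), (if k < n - 1 then τ k * τ (k + 1) * EE k
            else -(τ (n - 1) * τ 0 * EE (n - 1)))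
            = ∑ k ∈ Finset.range (n - 1), τ k * τ (k + 1) * EE k :=
          Finset.sum_congr rfl fun k hk => if_pos (Finset.mem_range.mp hk)
        rw [h1]; ring
      rw [hsp] at hmain
      exact hmain
    obtain ⟨q, hq0, hqtot, hqmar, hqlast⟩ := NCyc.core n hn mm EE hVcore hVlastcore hCcore
    refine ⟨q, hq0, hqtot, ?_⟩
    intro γ t
    obtain ⟨i, hγ⟩ := exists_edge γ
    have hγ2 : γ = cycCtxC hn i := Subtype.ext hγ.symm
    subst hγ2
    obtain ⟨a, b, rfl⟩ : ∃ a b, t = NCyc.pairJO hn i a b :=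
      ⟨t (NCyc.xi hn i), t (NCyc.xs hn i), NCyc.JO_eq hn i t⟩
    have hnoti : ¬((cycSucc i : Fin n) = i) := fun h => cycSucc_ne hn i h.symm
    have hcondR : ∀ o : (cycleScenario n hn).Glob,
        (Scenario.restr (cycleScenario n hn) (cycCtxC hn i).1 o = NCyc.pairJO hn i a b)
          ↔ (o i = a ∧ o (cycSucc i) = b) := by
      intro o
      constructor
      · intro h
        constructor
        · have h2 := congrFun h (NCyc.xi hn i)
          rw [NCyc.pairJO_xi] at h2
          exact h2
        · have h2 := congrFun h (NCyc.xs hn i)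
          rw [NCyc.pairJO_xs] at h2
          exact h2
      · rintro ⟨h1, h2⟩
        funext x
        rcases x with ⟨x, hx⟩
        rcases Finset.mem_insert.mp hx with h | h
        · subst h
          show o x = NCyc.pairJO hn x a b ⟨x, hx⟩
          rw [show NCyc.pairJO hn x a b ⟨x, hx⟩ = a from if_pos rfl]
          exact h1
        · replace h : x = cycSucc i := Finset.mem_singleton.mp h
          subst h
          show o (cycSucc i) = NCyc.pairJO hn i a b ⟨cycSucc i, hx⟩
          rw [show NCyc.pairJO hn i a b ⟨cycSucc i, hx⟩ = b from if_neg hnoti]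
          exact h2
    have hsc : (∑ o : (cycleScenario n hn).Glob, if (@Eq Bool (o i) a ∧ @Eq Bool (o (cycSucc i)) b)
          then q o else 0)
        = ∑ o : (cycleScenario n hn).Glob,
            if Scenario.restr (cycleScenario n hn) (cycCtxC hn i).1 o
              = NCyc.pairJO hn i a b then q o else 0 :=
      Finset.sum_congr rfl fun o _ => (if_congr (hcondR o) rfl rfl).symm
    refine Eq.trans ?_ (hsc.trans (Finset.sum_congr rfl fun o _ => by congr))
    -- goal : B (cycCtxC hn i) (pairJO i a b) = mar q i (cycSucc i) a b (as raw sum)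
    refine Eq.trans ?_ (show NCyc.mar q i (cycSucc i) a b = _ by
      unfold NCyc.mar; exact Finset.sum_congr rfl fun o _ => by congr)
    show P i a b = NCyc.mar q i (cycSucc i) a b
    rcases NCyc.cycSucc_cases (i := i) with ⟨e1, l1⟩ | ⟨e1, l1⟩
    · have hq := hqmar i (cycSucc i) e1 a b
      rw [hq, hrep i a b]
      have k1 : mm i.1 = M0 i := by rw [hmmv i.1 i.isLt, Fin.eta]
      have k2 : EE i.1 = Ecor i := by rw [hEEv i.1 i.isLt, Fin.eta]
      have k3 : mm (i.1 + 1) = M1 i := by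
        rw [hmmv (i.1 + 1) l1, hndM i]
        congr 1
        exact Fin.ext e1.symm
      rw [k1, k2, k3]
    · have hq := hqlast i (cycSucc i) l1 e1 a b
      rw [hq, hrep i a b]
      have k1 : mm (n - 1) = M0 i := by
        rw [hmmv (n - 1) (by omega)]
        congr 1
        exact Fin.ext l1.symm
      have k2 : EE (n - 1) = Ecor i := by
        rw [hEEv (n - 1) (by omega)]
        congr 1
        exact Fin.ext l1.symm
      have k3 : mm 0 = M1 i := by
        rw [hmmv 0 (by omega), hndM i]
        congr 1
        exact Fin.ext e1.symm
      rw [k1, k2, k3]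
  -- uniqueness
  obtain ⟨a₀, hs₀, ho₀, hv₀⟩ := hex
  have hE1 : ∀ i, |Ecor i| ≤ 1 := by
    intro i
    rw [abs_le]
    constructor <;> simp only [hEcor] <;>
      linarith [hPnn i true true, hPnn i true false, hPnn i false true,
        hPnn i false false, hPtot i]
  refine ⟨a₀, ⟨hs₀, ho₀, hv₀⟩, ?_⟩
  rintro a' ⟨hs', ho', hv'⟩
  refine NCyc.unique_violation Ecor hE1 a' a₀ hs' hs₀ ho' ho₀ ?_ ?_
  · rw [← hIfun]; exact hv'
  · rw [← hIfun]; exact hv₀
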